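/- Let μ be a finite measure on T, (a_i)_{i∈I} integrable functions, g = (g_i) real numbers, and suppose x_* = e^{∑_i λ*_i a_i − 1} satisfies the moment equations ∫_T a_i x_* dμ = g_i for all i ∈ I, with x_* ln x_* ∈ L¹(μ). Then for every bounded measurable x ≥ 0 satisfying ∫_T a_i x dμ = g_i for all i, one has ∫_T x_* ln x_* dμ ≤ ∫_T x ln x dμ. That is, x_* minimizes the relative entropy integral among all bounded nonnegative solutions of the moment equations. -/

import Mathlib

open MeasureTheory

/-- Young–Fenchel inequality: `x*y - e^{y-1} ≤ x ln x` for `x ≥ 0`. -/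
lemma young_entropy (x y : ℝ) (hx : 0 ≤ x) :
    x * y - Real.exp (y - 1) ≤ x * Real.log x := by
  rcases eq_or_lt_of_le hx with h | h
  · simp only [← h, zero_mul, zero_sub]
    have := Real.exp_pos (y - 1)
    linarith
  · have h1 : (y - 1 - Real.log x) + 1 ≤ Real.exp (y - 1 - Real.log x) :=
      Real.add_one_le_exp _
    have h2 : Real.exp (y - 1 - Real.log x) * x = Real.exp (y - 1) := by
      rw [← Real.exp_log h, ← Real.exp_add, Real.exp_log h]
      ring_nf
    nlinarith [Real.exp_pos (y - 1 - Real.log x)]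

/-- `e^u ≤ u * e^u + 1`. -/
lemma exp_le_mul_exp_add_one (u : ℝ) : Real.exp u ≤ u * Real.exp u + 1 := by
  have h1 : -u + 1 ≤ Real.exp (-u) := Real.add_one_le_exp _
  have h2 : Real.exp u * Real.exp (-u) = 1 := by
    rw [← Real.exp_add]; simp
  nlinarith [Real.exp_pos u]

/-- bounded entropy bound -/
lemma entropy_abs_bound {s C : ℝ} (hs : 0 ≤ s) (hsC : s ≤ C) :
    |s * Real.log s| ≤ C * C + C + 1 := by
  rcases eq_or_lt_of_le hs with h | h
  · rw [← h]; simp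
    nlinarith
  · have hub : Real.log s ≤ s - 1 := Real.log_le_sub_one_of_pos h
    have hlb : Real.log s⁻¹ ≤ s⁻¹ - 1 := Real.log_le_sub_one_of_pos (by positivity)
    rw [Real.log_inv] at hlb
    have hsi : s * s⁻¹ = 1 := mul_inv_cancel₀ (ne_of_gt h)
    rw [abs_le]
    constructor
    · nlinarith
    · nlinarith

theorem exp_density_minimizes_entropy_integral {T : Type*} [MeasurableSpace T]
    (μ : Measure T) [IsFiniteMeasure μ]
    {ι : Type*} [Fintype ι] (a : ι → T → ℝ) (ha : ∀ i, Integrable (a i) μ)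
    (g : ι → ℝ) (lam : ι → ℝ)
    (hxstar_mom : ∀ i, Integrable
      (fun t => a i t * Real.exp (∑ j, lam j * a j t - 1)) μ)
    (hmom : ∀ i, ∫ t, a i t * Real.exp (∑ j, lam j * a j t - 1) ∂μ = g i)
    (hlog : Integrable (fun t =>
      Real.exp (∑ j, lam j * a j t - 1) *
        Real.log (Real.exp (∑ j, lam j * a j t - 1))) μ) :
    ∀ x : T → ℝ, Measurable x → (∀ t, 0 ≤ x t) → (∃ C : ℝ, ∀ t, x t ≤ C) →
      (∀ i, Integrable (fun t => a i t * x t) μ) →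
      (∀ i, ∫ t, a i t * x t ∂μ = g i) →
      ∫ t, Real.exp (∑ j, lam j * a j t - 1) *
          Real.log (Real.exp (∑ j, lam j * a j t - 1)) ∂μ
        ≤ ∫ t, x t * Real.log (x t) ∂μ := by
  intro x hxm hx0 ⟨C, hxC⟩ hax hmomx
  set y : T → ℝ := fun t => ∑ j, lam j * a j t with hy
  set xs : T → ℝ := fun t => Real.exp (y t - 1) with hxs
  -- measurability of y and xs
  have hym : AEStronglyMeasurable y μ := by
    apply Finset.aestronglyMeasurable_fun_sum
    intro j _
    exact ((ha j).aestronglyMeasurable.const_mul _)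
  have hxsm : AEStronglyMeasurable xs μ :=
    (Real.continuous_exp.comp_aestronglyMeasurable (hym.sub aestronglyMeasurable_const))
  -- log of xs
  have hxslog : ∀ t, xs t * Real.log (xs t) = xs t * (y t - 1) := fun t => by
    rw [hxs, Real.log_exp]
  have hlog' : Integrable (fun t => xs t * (y t - 1)) μ :=
    hlog.congr (Filter.Eventually.of_forall fun t => hxslog t)
  -- xs integrable
  have hxs_int : Integrable xs μ := by
    refine Integrable.mono' (hlog'.abs.add (integrable_const 1)) hxsm
      (Filter.Eventually.of_forall fun t => ?_)
    have h1 : Real.exp (y t - 1) ≤ (y t - 1) * Real.exp (y t - 1) + 1 :=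
      exp_le_mul_exp_add_one _
    have h2 : xs t * (y t - 1) ≤ |xs t * (y t - 1)| := le_abs_self _
    simp only [Pi.add_apply, Real.norm_eq_abs, hxs,
      abs_of_nonneg (le_of_lt (Real.exp_pos _))]
    nlinarith
  -- xs * y integrable
  have hxsy_int : Integrable (fun t => xs t * y t) μ := by
    have : Integrable (fun t => ∑ j, lam j * (a j t * xs t)) μ :=
      integrable_finset_sum _ (fun j _ => ((hxstar_mom j).const_mul (lam j)))
    refine this.congr (Filter.Eventually.of_forall fun t => ?_)
    show ∑ j, lam j * (a j t * xs t) = xs t * ∑ j, lam j * a j t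
    rw [Finset.mul_sum]
    exact Finset.sum_congr rfl fun j _ => by ring
  -- x * y integrable
  have hxy_int : Integrable (fun t => x t * y t) μ := by
    have : Integrable (fun t => ∑ j, lam j * (a j t * x t)) μ :=
      integrable_finset_sum _ (fun j _ => ((hax j).const_mul (lam j)))
    refine this.congr (Filter.Eventually.of_forall fun t => ?_)
    show ∑ j, lam j * (a j t * x t) = x t * ∑ j, lam j * a j t
    rw [Finset.mul_sum]
    exact Finset.sum_congr rfl fun j _ => by ring
  -- x log x integrable
  have hxlog_int : Integrable (fun t => x t * Real.log (x t)) μ := by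
    refine Integrable.mono' (integrable_const (C * C + C + 1))
      ((hxm.mul (Real.measurable_log.comp hxm)).aestronglyMeasurable)
      (Filter.Eventually.of_forall fun t => entropy_abs_bound (hx0 t) (hxC t))
  -- key integral identities
  have hIxs : ∫ t, xs t * y t ∂μ = ∑ j, lam j * g j := by
    have heq : ∀ t, xs t * y t = ∑ j, lam j * (a j t * xs t) := by
      intro t
      show xs t * ∑ j, lam j * a j t = _
      rw [Finset.mul_sum]
      exact Finset.sum_congr rfl fun j _ => by ring
    rw [integral_congr_ae (Filter.Eventually.of_forall heq),
      integral_finset_sum _ (fun j _ => ((hxstar_mom j).const_mul (lam j)))]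
    refine Finset.sum_congr rfl fun j _ => ?_
    rw [integral_const_mul]
    congr 1
    exact hmom j
  have hIx : ∫ t, x t * y t ∂μ = ∑ j, lam j * g j := by
    have heq : ∀ t, x t * y t = ∑ j, lam j * (a j t * x t) := by
      intro t
      show x t * ∑ j, lam j * a j t = _
      rw [Finset.mul_sum]
      exact Finset.sum_congr rfl fun j _ => by ring
    rw [integral_congr_ae (Filter.Eventually.of_forall heq),
      integral_finset_sum _ (fun j _ => ((hax j).const_mul (lam j)))]
    refine Finset.sum_congr rfl fun j _ => ?_
    rw [integral_const_mul]
    congr 1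
    exact hmomx j
  -- LHS computation
  have hLHS : ∫ t, Real.exp (∑ j, lam j * a j t - 1) *
      Real.log (Real.exp (∑ j, lam j * a j t - 1)) ∂μ
      = (∑ j, lam j * g j) - ∫ t, xs t ∂μ := by
    calc ∫ t, Real.exp (∑ j, lam j * a j t - 1) *
        Real.log (Real.exp (∑ j, lam j * a j t - 1)) ∂μ
        = ∫ t, xs t * y t - xs t ∂μ := by
          apply integral_congr_ae (Filter.Eventually.of_forall fun t => ?_)
          rw [show Real.exp (∑ j, lam j * a j t - 1) = xs t from rfl, hxslog t]
          ring
      _ = (∫ t, xs t * y t ∂μ) - ∫ t, xs t ∂μ := integral_sub hxsy_int hxs_int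
      _ = (∑ j, lam j * g j) - ∫ t, xs t ∂μ := by rw [hIxs]
  rw [hLHS]
  have : (∑ j, lam j * g j) - ∫ t, xs t ∂μ = ∫ t, x t * y t - xs t ∂μ := by
    rw [integral_sub hxy_int hxs_int, hIx]
  rw [this]
  apply integral_mono (hxy_int.sub hxs_int) hxlog_int
  intro t
  exact young_entropy (x t) (y t) (hx0 t)
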